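/- Let M, N be sharp fs monoids and i₁, i₂ : N → M local morphisms of monoids, neither of which is injective. Then there exists a sharp fs monoid L with N ⊆ L ⊆ N^gp such that neither push-out M ⊔_{i₁, N} L nor M ⊔_{i₂, N} L (where N → L is the inclusion) is quasi-integral. -/

import Mathlib

set_option linter.unusedSectionVars false
set_option linter.unusedVariables false
set_option maxHeartbeats 1000000

open Matrix Finset



/-- `η : M →+ G` exhibits the abelian group `G` as the groupification of the
commutative monoid `M`. -/
def IsGroupification {M G : Type*} [AddCommMonoid M] [AddCommGroup G] (η : M →+ G) : Prop :=
  (∀ x : G, ∃ a b : M, x = η a - η b) ∧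
  (∀ a b : M, η a = η b ↔ ∃ k : M, a + k = b + k)

/-- A commutative monoid is sharp if its unit group is trivial. -/
def IsSharp (M : Type*) [AddCommMonoid M] : Prop := ∀ x : M, IsAddUnit x → x = 0

/-- A morphism of monoids is local if the preimage of the unit group is the unit group. -/
def IsLocalMonoidHom {N M : Type*} [AddCommMonoid N] [AddCommMonoid M] (f : N →+ M) : Prop :=
  ∀ n : N, IsAddUnit (f n) → IsAddUnit n

/-- `(P, iM, iL)` is the push-out `M ⊔_N L` of `f : N →+ M` and `g : N →+ L` in the
category of commutative monoids. -/
def IsMonPushout {N M L P : Type*} [AddCommMonoid N] [AddCommMonoid M] [AddCommMonoid L]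
    [AddCommMonoid P] (f : N →+ M) (g : N →+ L) (iM : M →+ P) (iL : L →+ P) : Prop :=
  iM.comp f = iL.comp g ∧
  ∀ (Q : Type*) [AddCommMonoid Q] (jM : M →+ Q) (jL : L →+ Q),
    jM.comp f = jL.comp g → ∃! h : P →+ Q, h.comp iM = jM ∧ h.comp iL = jL

/-- The saturation of a subset `P` of an abelian group `G`:
`P^sat = { x ∈ G | ∃ a ≥ 1, a • x ∈ P }`. -/
def saturationOf {G : Type*} [AddCommGroup G] (P : Set G) : Set G :=
  {x : G | ∃ a : ℕ, 0 < a ∧ a • x ∈ P}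



namespace Stmt9Aux

variable {ι : Type*} [Fintype ι] [DecidableEq ι]

lemma dot_sum {κ : Type*} (w : ι → ℚ) (s : Finset κ) (f : κ → ι → ℚ) :
    w ⬝ᵥ (∑ j ∈ s, f j) = ∑ j ∈ s, w ⬝ᵥ f j := by
  simp only [dotProduct, Finset.sum_apply, Finset.mul_sum]
  exact Finset.sum_comm

lemma exists_eps {m : ℕ} (a c : Fin m → ℚ) (ha : ∀ j, 0 < a j) :
    ∃ ε : ℚ, 0 < ε ∧ ∀ j, ε * c j < a j := by
  rcases isEmpty_or_nonempty (Fin m) with h | h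
  · exact ⟨1, one_pos, fun j => isEmptyElim j⟩
  · refine ⟨Finset.univ.inf' Finset.univ_nonempty (fun j => a j / (|c j| + 1)), ?_, ?_⟩
    · rw [Finset.lt_inf'_iff]
      intro j _
      have : (0:ℚ) < |c j| + 1 := by positivity
      exact div_pos (ha j) this
    · intro j
      set ε := Finset.univ.inf' Finset.univ_nonempty (fun j => a j / (|c j| + 1)) with hε
      have hεpos : 0 < ε := by
        rw [hε, Finset.lt_inf'_iff]
        intro j _
        have : (0:ℚ) < |c j| + 1 := by positivity
        exact div_pos (ha j) this
      have h1 : ε ≤ a j / (|c j| + 1) := Finset.inf'_le _ (Finset.mem_univ j)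
      have hc : (0:ℚ) < |c j| + 1 := by positivity
      have h2 : ε * c j ≤ ε * |c j| :=
        mul_le_mul_of_nonneg_left (le_abs_self _) hεpos.le
      have h3 : ε * |c j| < ε * (|c j| + 1) := by
        have := hεpos
        nlinarith
      have h4 : ε * (|c j| + 1) ≤ (a j / (|c j| + 1)) * (|c j| + 1) :=
        mul_le_mul_of_nonneg_right h1 hc.le
      have h5 : (a j / (|c j| + 1)) * (|c j| + 1) = a j := div_mul_cancel₀ _ hc.ne'
      linarith

lemma gordan_combine {m : ℕ} (v' : Fin m → ι → ℚ) (a φ θ : ι → ℚ)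
    (hφv' : ∀ j, 0 < φ ⬝ᵥ v' j) (hφa : φ ⬝ᵥ a = 0) (hθa : 0 < θ ⬝ᵥ a) :
    ∃ w : ι → ℚ, (∀ j, 0 < w ⬝ᵥ v' j) ∧ 0 < w ⬝ᵥ a := by
  obtain ⟨ε, hε, hlt⟩ := exists_eps (fun j => φ ⬝ᵥ v' j) (fun j => -(θ ⬝ᵥ v' j)) hφv'
  refine ⟨φ + ε • θ, ?_, ?_⟩
  · intro j
    have := hlt j
    rw [add_dotProduct, smul_dotProduct, smul_eq_mul]
    nlinarith
  · rw [add_dotProduct, smul_dotProduct, smul_eq_mul, hφa]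
    nlinarith


theorem gordan : ∀ (m : ℕ) (v : Fin m → ι → ℚ),
    (∃ w : ι → ℚ, ∀ j, 0 < w ⬝ᵥ v j) ∨
    (∃ t : Fin m → ℚ, (∀ j, 0 ≤ t j) ∧ (∃ j, t j ≠ 0) ∧ ∑ j, t j • v j = 0)
  | 0, v => Or.inl ⟨0, fun j => j.elim0⟩
  | (m+1), v => by
    set a : ι → ℚ := v (Fin.last m) with ha_def
    by_cases ha0 : a = 0
    · refine Or.inr ⟨fun j => if j = Fin.last m then 1 else 0, ?_, ⟨Fin.last m, by simp⟩, ?_⟩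
      · intro j; dsimp only; split <;> norm_num
      · rw [Fin.sum_univ_castSucc]
        have hz : ∀ j : Fin m, (if (j.castSucc : Fin (m+1)) = Fin.last m then (1:ℚ) else 0) = 0 := by
          intro j; rw [if_neg]; exact (Fin.castSucc_lt_last j).ne
        simp [hz, ← ha_def, ha0]
    · set v' : Fin m → ι → ℚ := fun j => v j.castSucc with hv'_def
      rcases gordan m v' with ⟨ψ, hψ⟩ | ⟨t, ht0, ⟨j0, hj0⟩, hrel⟩
      · rcases lt_trichotomy (ψ ⬝ᵥ a) 0 with hneg | hzero | hpos
        · -- reflected family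
          set hh : Fin m → ι → ℚ := fun j => (ψ ⬝ᵥ a) • v' j - (ψ ⬝ᵥ v' j) • a with hh_def
          rcases gordan m hh with ⟨χ, hχ⟩ | ⟨s, hs0, ⟨k0, hk0⟩, hsrel⟩
          · set φ : ι → ℚ := (ψ ⬝ᵥ a) • χ - (χ ⬝ᵥ a) • ψ with hφ_def
            have hφv' : ∀ j, 0 < φ ⬝ᵥ v' j := by
              intro j
              have h1 := hχ j
              rw [hh_def] at h1
              rw [hφ_def]
              rw [sub_dotProduct, smul_dotProduct, smul_dotProduct] at *
              rw [dotProduct_sub, dotProduct_smul, dotProduct_smul] at h1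
              simp only [smul_eq_mul] at *
              nlinarith [h1]
            have hφa : φ ⬝ᵥ a = 0 := by
              rw [hφ_def, sub_dotProduct, smul_dotProduct, smul_dotProduct]
              simp only [smul_eq_mul]; ring
            have hθa : 0 < (-ψ) ⬝ᵥ a := by
              rw [neg_dotProduct]; linarith
            obtain ⟨w, hw1, hw2⟩ := gordan_combine v' a φ (-ψ) hφv' hφa hθa
            exact Or.inl ⟨w, fun j => Fin.lastCases hw2 hw1 j⟩
          · -- relation case
            set A : ℚ := ∑ j, s j * (ψ ⬝ᵥ v' j) with hA_def
            have hA : 0 < A := by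
              rw [hA_def]
              apply Finset.sum_pos' (fun j _ => mul_nonneg (hs0 j) (hψ j).le)
              refine ⟨k0, Finset.mem_univ _, ?_⟩
              exact mul_pos ((hs0 k0).lt_of_ne (Ne.symm hk0)) (hψ k0)
            have hder : (ψ ⬝ᵥ a) • (∑ j, s j • v' j) = A • a := by
              have h1 : ∑ j, s j • hh j =
                  (ψ ⬝ᵥ a) • (∑ j, s j • v' j) - A • a := by
                rw [Finset.smul_sum, hA_def, Finset.sum_smul, ← Finset.sum_sub_distrib]
                apply Finset.sum_congr rfl
                intro j _
                simp only [hh_def]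
                rw [smul_sub, smul_comm (s j) (ψ ⬝ᵥ a), smul_smul, smul_smul]
              rw [hsrel] at h1
              exact sub_eq_zero.mp h1.symm
            refine Or.inr ⟨Fin.snoc (fun j => (-(ψ ⬝ᵥ a)) * s j) A, ?_, ?_, ?_⟩
            · intro j
              refine Fin.lastCases ?_ ?_ j
              · rw [Fin.snoc_last]; exact hA.le
              · intro j'; rw [Fin.snoc_castSucc]
                exact mul_nonneg (by linarith) (hs0 j')
            · exact ⟨Fin.last m, by rw [Fin.snoc_last]; exact hA.ne'⟩
            · rw [Fin.sum_univ_castSucc]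
              simp only [Fin.snoc_castSucc, Fin.snoc_last]
              have h2 : ∑ j : Fin m, ((-(ψ ⬝ᵥ a)) * s j) • v j.castSucc
                  = (-(ψ ⬝ᵥ a)) • ∑ j, s j • v' j := by
                rw [Finset.smul_sum]
                apply Finset.sum_congr rfl
                intro j _
                rw [smul_smul, hv'_def]
              rw [h2, neg_smul, hder, ← ha_def, neg_add_cancel]
        · -- ψ ⬝ᵥ a = 0, a ≠ 0
          obtain ⟨i, hi⟩ := Function.ne_iff.mp ha0
          have hi' : a i ≠ 0 := hi
          set χ : ι → ℚ := Pi.single i (-(a i)) with hχ_def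
          have hχa : χ ⬝ᵥ a < 0 := by
            rw [hχ_def, single_dotProduct]
            have : a i * a i > 0 := mul_self_pos.mpr hi'
            nlinarith
          set φ : ι → ℚ := (-(χ ⬝ᵥ a)) • ψ with hφ_def
          have hφv' : ∀ j, 0 < φ ⬝ᵥ v' j := by
            intro j
            rw [hφ_def, smul_dotProduct, smul_eq_mul]
            exact mul_pos (by linarith) (hψ j)
          have hφa : φ ⬝ᵥ a = 0 := by
            rw [hφ_def, smul_dotProduct, smul_eq_mul, hzero, mul_zero]
          have hθa : 0 < (-χ) ⬝ᵥ a := by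
            rw [neg_dotProduct]; linarith
          obtain ⟨w, hw1, hw2⟩ := gordan_combine v' a φ (-χ) hφv' hφa hθa
          exact Or.inl ⟨w, fun j => Fin.lastCases hw2 hw1 j⟩
        · exact Or.inl ⟨ψ, fun j => Fin.lastCases hpos hψ j⟩
      · -- relation among v'
        refine Or.inr ⟨Fin.snoc t 0, ?_, ?_, ?_⟩
        · intro j
          refine Fin.lastCases ?_ ?_ j
          · rw [Fin.snoc_last]
          · intro j'; rw [Fin.snoc_castSucc]; exact ht0 j'
        · exact ⟨j0.castSucc, by rw [Fin.snoc_castSucc]; exact hj0⟩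
        · rw [Fin.sum_univ_castSucc]
          simp only [Fin.snoc_castSucc, Fin.snoc_last, zero_smul, add_zero]
          exact hrel


lemma norel {m : ℕ} (v : Fin m → ι → ℚ) (w : ι → ℚ) (hw : ∀ j, 0 < w ⬝ᵥ v j)
    {t : Fin m → ℚ} (ht : ∀ j, 0 ≤ t j) (hrel : ∑ j, t j • v j = 0) : ∀ j, t j = 0 := by
  have h0 : ∑ j, t j * (w ⬝ᵥ v j) = 0 := by
    have h1 := congrArg (fun x => w ⬝ᵥ x) hrel
    simp only [dot_sum, dotProduct_smul, smul_eq_mul, dotProduct_zero] at h1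
    exact h1
  intro j
  have h2 := (Finset.sum_eq_zero_iff_of_nonneg
    (fun j _ => mul_nonneg (ht j) (hw j).le)).mp h0 j (Finset.mem_univ j)
  rcases mul_eq_zero.mp h2 with h | h
  · exact h
  · exact absurd h (hw j).ne'

lemma gordan_ext {m : ℕ} (v : Fin m → ι → ℚ)
    (hno : ∀ t : Fin m → ℚ, (∀ j, 0 ≤ t j) → ∑ j, t j • v j = 0 → ∀ j, t j = 0)
    (x : ι → ℚ) (hx : x ≠ 0) :
    ∃ (w : ι → ℚ) (y : ι → ℚ), (y = x ∨ y = -x) ∧ (∀ j, 0 < w ⬝ᵥ v j) ∧ 0 < w ⬝ᵥ y := by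
  have keylast : ∀ (u : ι → ℚ) (t : Fin (m+1) → ℚ), (∀ j, 0 ≤ t j) → (∃ j, t j ≠ 0) →
      (∑ j, t j • (Fin.snoc v u : Fin (m+1) → ι → ℚ) j = 0) →
      0 < t (Fin.last m) ∧ (∑ j : Fin m, t j.castSucc • v j) + t (Fin.last m) • u = 0 := by
    intro u t ht0 ⟨j0, hj0⟩ hrel
    have hsum : (∑ j : Fin m, t j.castSucc • v j) + t (Fin.last m) • u = 0 := by
      rw [← hrel, Fin.sum_univ_castSucc]
      simp only [Fin.snoc_castSucc, Fin.snoc_last]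
    refine ⟨?_, hsum⟩
    rcases (ht0 (Fin.last m)).lt_or_eq with h | h
    · exact h
    · exfalso
      have hrel' : ∑ j : Fin m, t j.castSucc • v j = 0 := by
        rw [← h, zero_smul, add_zero] at hsum; exact hsum
      have hall := hno (fun j => t j.castSucc) (fun j => ht0 _) hrel'
      revert hj0
      refine Fin.lastCases ?_ ?_ j0
      · intro hj0; exact hj0 h.symm
      · intro j' hj0; exact hj0 (hall j')
  rcases gordan (m+1) (Fin.snoc v x) with ⟨w, hw⟩ | ⟨t, ht0, htne, htrel⟩
  · refine ⟨w, x, Or.inl rfl, fun j => ?_, ?_⟩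
    · have := hw j.castSucc; rwa [Fin.snoc_castSucc] at this
    · have := hw (Fin.last m); rwa [Fin.snoc_last] at this
  · rcases gordan (m+1) (Fin.snoc v (-x)) with ⟨w, hw⟩ | ⟨t', ht0', htne', htrel'⟩
    · refine ⟨w, -x, Or.inr rfl, fun j => ?_, ?_⟩
      · have := hw j.castSucc; rwa [Fin.snoc_castSucc] at this
      · have := hw (Fin.last m); rwa [Fin.snoc_last] at this
    · exfalso
      obtain ⟨hL, hrel1⟩ := keylast x t ht0 (by
        obtain ⟨j, hj⟩ := htne; exact ⟨j, hj⟩) htrel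
      obtain ⟨hL', hrel2⟩ := keylast (-x) t' ht0' (by
        obtain ⟨j, hj⟩ := htne'; exact ⟨j, hj⟩) htrel'
      set tL := t (Fin.last m)
      set tL' := t' (Fin.last m)
      have hcomb : ∑ j : Fin m, (tL' * t j.castSucc + tL * t' j.castSucc) • v j = 0 := by
        have e1 := congrArg (fun z => tL' • z) hrel1
        have e2 := congrArg (fun z => tL • z) hrel2
        simp only [smul_add, smul_zero, Finset.smul_sum, smul_smul] at e1 e2
        have e3 : (∑ j : Fin m, (tL' * t j.castSucc) • v j)
            + (∑ j : Fin m, (tL * t' j.castSucc) • v j)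
            + (tL' * tL) • x + (tL * tL') • (-x) = 0 := by
          have := congrArg₂ (· + ·) e1 e2
          simp only [add_zero] at this
          rw [← this]; abel
        rw [smul_neg, mul_comm tL tL', add_neg_cancel_right, ← Finset.sum_add_distrib] at e3
        simpa only [add_smul] using e3
      have hzero := hno _ (fun j => add_nonneg (mul_nonneg hL'.le (ht0 _)) (mul_nonneg hL.le (ht0' _))) hcomb
      have ht_all : ∀ j : Fin m, t j.castSucc = 0 := by
        intro j
        have h := hzero j
        have h1 : 0 ≤ tL' * t j.castSucc := mul_nonneg hL'.le (ht0 _)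
        have h2 : 0 ≤ tL * t' j.castSucc := mul_nonneg hL.le (ht0' _)
        have h3 : tL' * t j.castSucc = 0 := by linarith
        rcases mul_eq_zero.mp h3 with h4 | h4
        · exact absurd h4 hL'.ne'
        · exact h4
      have : tL • x = 0 := by
        rw [← hrel1]
        rw [Finset.sum_eq_zero (fun j _ => by rw [ht_all j, zero_smul])]
        rw [zero_add]
      rcases smul_eq_zero.mp this with h | h
      · exact hL.ne' h
      · exact hx h


lemma exists_int_vec (w : ι → ℚ) :
    ∃ (z : ι → ℤ) (d : ℚ), 0 < d ∧ ∀ i, (z i : ℚ) = d * w i := by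
  set dd : ℕ := ∏ i, (w i).den with hdd_def
  have hdd : 0 < dd := Finset.prod_pos (fun i _ => (w i).pos)
  refine ⟨fun i => (w i).num * ((dd / (w i).den : ℕ) : ℤ), (dd : ℚ), by positivity, ?_⟩
  intro i
  have hdvd : (w i).den ∣ dd := Finset.dvd_prod_of_mem _ (Finset.mem_univ i)
  have hden : ((w i).den : ℚ) ≠ 0 := by positivity
  have h1 : ((dd / (w i).den : ℕ) : ℚ) * ((w i).den : ℚ) = (dd : ℚ) := by
    exact_mod_cast congrArg (Nat.cast : ℕ → ℚ) (Nat.div_mul_cancel hdvd)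
  have h2 : ((w i).num : ℚ) = w i * ((w i).den : ℚ) :=
    (div_eq_iff hden).mp (Rat.num_div_den (w i))
  rw [Int.cast_mul, Int.cast_natCast, h2, ← h1]
  ring

lemma fg_posSubmonoid {G : Type*} [AddCommGroup G] (f : ι → (G →+ ℤ))
    (hinj : ∀ x : G, (∀ i, f i x = 0) → x = 0)
    (D : ℤ) (hD : 0 < D) (z : ι → G)
    (hz : ∀ i j, f j (z i) = if i = j then D else 0)
    (Lc : AddSubmonoid G) (hLc : ∀ x, x ∈ Lc ↔ ∀ i, 0 ≤ f i x) : Lc.FG := by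
  classical
  have hbox : {x : G | ∀ i, 0 ≤ f i x ∧ f i x ≤ D}.Finite := by
    have himg : (fun (x : G) (i : ι) => f i x) '' {x : G | ∀ i, 0 ≤ f i x ∧ f i x ≤ D} ⊆
        Set.univ.pi (fun _ => Set.Icc 0 D) := by
      rintro y ⟨x, hx, rfl⟩
      intro i _
      exact ⟨(hx i).1, (hx i).2⟩
    have hfin : ((fun (x : G) (i : ι) => f i x) ''
        {x : G | ∀ i, 0 ≤ f i x ∧ f i x ≤ D}).Finite :=
      Set.Finite.subset (Set.Finite.pi (fun _ => Set.finite_Icc 0 D)) himg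
    apply Set.Finite.of_finite_image hfin
    intro x _ y _ hxy
    apply eq_of_sub_eq_zero
    apply hinj (x - y)
    intro i
    rw [map_sub]
    have h := congrFun hxy i
    simp only at h
    omega
  set SS : Finset G := hbox.toFinset ∪ Finset.univ.image z with hSS_def
  have hmemSS : ∀ x : G, ((∀ i, 0 ≤ f i x ∧ f i x ≤ D) ∨ ∃ i, z i = x) → x ∈ (SS : Set G) := by
    intro x hx
    simp only [hSS_def, Finset.coe_union, Set.mem_union, Finset.mem_coe,
      Set.Finite.mem_toFinset, Finset.mem_image, Finset.mem_univ, true_and]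
    exact hx.imp id (fun h => h)
  refine ⟨SS, le_antisymm ?_ ?_⟩
  · rw [AddSubmonoid.closure_le]
    intro x hx
    simp only [hSS_def, Finset.coe_union, Set.mem_union, Finset.mem_coe,
      Set.Finite.mem_toFinset, Finset.mem_image, Finset.mem_univ, true_and,
      Set.mem_setOf_eq] at hx
    rcases hx with hx | ⟨i, rfl⟩
    · exact (hLc x).mpr (fun i => (hx i).1)
    · refine (hLc _).mpr (fun j => ?_)
      rw [hz]
      split
      · omega
      · omega
  · intro x hx
    rw [hLc] at hx
    have key : ∀ (n : ℕ) (x : G), (∀ i, 0 ≤ f i x) → (∑ i, f i x).toNat ≤ n →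
        x ∈ AddSubmonoid.closure (SS : Set G) := by
      intro n
      induction n with
      | zero =>
        intro x hx hn
        apply AddSubmonoid.subset_closure
        apply hmemSS
        refine Or.inl (fun i => ⟨hx i, ?_⟩)
        have h1 : f i x ≤ ∑ j, f j x :=
          Finset.single_le_sum (fun j _ => hx j) (Finset.mem_univ i)
        omega
      | succ n ih =>
        intro x hx hn
        by_cases hsmall : ∀ i, f i x ≤ D
        · exact AddSubmonoid.subset_closure (hmemSS x (Or.inl (fun i => ⟨hx i, hsmall i⟩)))
        · push_neg at hsmall
          obtain ⟨i0, hi0⟩ := hsmall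
          set y := x - z i0 with hy_def
          have hfy : ∀ j, f j y = f j x - (if i0 = j then D else 0) := by
            intro j; rw [hy_def, map_sub, hz]
          have hy : ∀ j, 0 ≤ f j y := by
            intro j
            have h1 := hx j
            rw [hfy]
            split
            · next h => subst h; omega
            · omega
          have hsumy : ∑ j, f j y = (∑ j, f j x) - D := by
            rw [Finset.sum_congr rfl (fun j _ => hfy j), Finset.sum_sub_distrib,
              Finset.sum_ite_eq Finset.univ i0 (fun _ => D), if_pos (Finset.mem_univ i0)]
          have hle : (∑ j, f j y).toNat ≤ n := by
            have h1 : 0 ≤ ∑ j, f j y := Finset.sum_nonneg (fun j _ => hy j)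
            have h2 : 0 ≤ ∑ j, f j x := Finset.sum_nonneg (fun j _ => hx j)
            omega
          have hx_eq : x = z i0 + y := by rw [hy_def]; abel
          rw [hx_eq]
          exact AddSubmonoid.add_mem _
            (AddSubmonoid.subset_closure (hmemSS _ (Or.inr ⟨i0, rfl⟩)))
            (ih y hy hle)
    exact key (∑ i, f i x).toNat x hx le_rfl

open Classical in
noncomputable def indic (M : Type*) [AddCommMonoid M] (h : ∀ x y : M, x + y = 0 → x = 0) :
    M →+ WithTop ℕ where
  toFun m := if m = 0 then 0 else ⊤
  map_zero' := by simp
  map_add' x y := by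
    by_cases hx : x = 0
    · simp [hx]
    · by_cases hy : y = 0
      · simp [hy]
      · have hxy : x + y ≠ 0 := fun hc => hx (h x y hc)
        simp [hx, hy, hxy]

open Classical in
lemma indic_apply {M : Type*} [AddCommMonoid M] (h : ∀ x y : M, x + y = 0 → x = 0) (m : M) :
    indic M h m = if m = 0 then 0 else ⊤ := rfl


lemma pushout_helper {N M Ngp : Type*} [AddCommMonoid N] [AddCommMonoid M] [AddCommGroup Ngp]
    (ηN : N →+ Ngp) (hNinj : Function.Injective ηN) (hNsharp : IsSharp N)
    (hMsharp : IsSharp M) (i : N →+ M) (hloc : IsLocalMonoidHom i)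
    (L : AddSubmonoid Ngp) (hsub : ∀ n, ηN n ∈ L)
    (hLsharp : ∀ x : Ngp, x ∈ L → -x ∈ L → x = 0)
    (a b : N) (hab : a ≠ b) (hi : i a = i b) (hmem : ηN a - ηN b ∈ L)
    (P : Type*) [AddCommMonoid P] (iM : M →+ P) (iL : ↥L →+ P)
    (hpo : IsMonPushout i (ηN.codRestrict L hsub) iM iL)
    (Pgp : Type*) [AddCommGroup Pgp] (ηP : P →+ Pgp) :
    ∃ p : P, ηP p = 0 ∧ p ≠ 0 := by
  classical
  set g := ηN.codRestrict L hsub with hg_def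
  set c : ↥L := ⟨ηN a - ηN b, hmem⟩ with hc_def
  have hsq : ∀ n : N, iM (i n) = iL (g n) := fun n => DFunLike.congr_fun hpo.1 n
  have hgab : g b + c = g a := by
    apply Subtype.ext
    show ηN b + (ηN a - ηN b) = ηN a
    abel
  have hpa : iL (g a) = iL (g b) := by rw [← hsq, ← hsq, hi]
  have h0 : ηP (iL c) = 0 := by
    have h1 : iL (g b) + iL c = iL (g a) := by rw [← map_add, hgab]
    rw [hpa] at h1
    have h2 := congrArg ηP h1
    rw [map_add] at h2
    exact add_eq_left.mp h2
  have hLsharp' : ∀ x y : ↥L, x + y = 0 → x = 0 := by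
    intro x y hxy
    have hval : (x : Ngp) + (y : Ngp) = 0 := congrArg Subtype.val hxy
    have hnx : -(x : Ngp) ∈ L := by
      rw [neg_eq_of_add_eq_zero_right hval]
      exact y.2
    exact Subtype.ext (hLsharp _ x.2 hnx)
  set jM := indic M (fun x y h => hMsharp x (IsAddUnit.of_add_eq_zero y h)) with hjM_def
  set jL := indic (↥L) hLsharp' with hjL_def
  have hcomm : jM.comp i = jL.comp g := by
    ext n
    simp only [AddMonoidHom.comp_apply, hjM_def, hjL_def, indic_apply]
    by_cases hn : n = 0
    · rw [if_pos (by rw [hn, map_zero]), if_pos (by rw [hn, map_zero])]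
    · have h1 : i n ≠ 0 := by
        intro hc
        exact hn (hNsharp n (hloc n (by rw [hc]; exact isAddUnit_zero)))
      have h2 : g n ≠ 0 := by
        intro hc
        have : ηN n = 0 := congrArg Subtype.val hc
        exact hn (hNinj (by rw [this, map_zero]))
      rw [if_neg h1, if_neg h2]
  obtain ⟨h, ⟨hhM, hhL⟩, -⟩ := hpo.2 (ULift (WithTop ℕ))
    ((AddEquiv.ulift.symm.toAddMonoidHom).comp jM)
    ((AddEquiv.ulift.symm.toAddMonoidHom).comp jL)
    (by rw [AddMonoidHom.comp_assoc, AddMonoidHom.comp_assoc, hcomm])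
  refine ⟨iL c, h0, ?_⟩
  intro hc0
  have h3 := DFunLike.congr_fun hhL c
  rw [AddMonoidHom.comp_apply, hc0, map_zero, AddMonoidHom.comp_apply] at h3
  have hjLc : jL c = 0 := by
    apply (AddEquiv.ulift.symm : WithTop ℕ ≃+ ULift (WithTop ℕ)).injective
    rw [map_zero]
    exact h3.symm
  have hcne : c ≠ 0 := by
    intro hc
    have hval : ηN a - ηN b = 0 := congrArg Subtype.val hc
    exact hab (hNinj (sub_eq_zero.mp hval))
  rw [hjL_def, indic_apply, if_neg hcne] at hjLc
  exact (by simp : (⊤ : WithTop ℕ) ≠ 0) hjLc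



end Stmt9Aux

open Stmt9Aux in
/-- Let `M, N` be sharp fs monoids and `i₁, i₂ : N → M` local morphisms, neither of which
is injective.  Then there exists a sharp fs monoid `L` with `N ⊆ L ⊆ N^gp` such that
neither push-out `M ⊔_{i₁,N} L` nor `M ⊔_{i₂,N} L` (along the inclusion `N ↪ L`) is
quasi-integral. -/

theorem stmt9 {N M Ngp Mgp : Type*} [AddCommMonoid N] [AddCommMonoid M]
    [AddCommGroup Ngp] [AddCommGroup Mgp]
    (ηN : N →+ Ngp) (hgpN : IsGroupification ηN) (hNinj : Function.Injective ηN)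
    (hNsharp : IsSharp N) (hNfg : AddMonoid.FG N)
    (hNsat : ∀ x : Ngp, (∃ a : ℕ, 0 < a ∧ a • x ∈ AddMonoidHom.mrange ηN) →
      x ∈ AddMonoidHom.mrange ηN)
    (ηM : M →+ Mgp) (hgpM : IsGroupification ηM) (hMinj : Function.Injective ηM)
    (hMsharp : IsSharp M) (hMfg : AddMonoid.FG M)
    (hMsat : ∀ x : Mgp, (∃ a : ℕ, 0 < a ∧ a • x ∈ AddMonoidHom.mrange ηM) →
      x ∈ AddMonoidHom.mrange ηM)
    (i₁ i₂ : N →+ M) (h₁loc : IsLocalMonoidHom i₁) (h₂loc : IsLocalMonoidHom i₂)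
    (h₁ : ¬ Function.Injective i₁) (h₂ : ¬ Function.Injective i₂) :
    ∃ (L : AddSubmonoid Ngp) (hsub : ∀ n : N, ηN n ∈ L),
      (∀ x : Ngp, x ∈ L → -x ∈ L → x = 0) ∧
      L.FG ∧
      (∀ x : Ngp, (∃ a : ℕ, 0 < a ∧ a • x ∈ L) → x ∈ L) ∧
      (∀ (P : Type*) [AddCommMonoid P] (iM : M →+ P) (iL : L →+ P),
        IsMonPushout i₁ (ηN.codRestrict L hsub) iM iL →
        ∀ (Pgp : Type*) [AddCommGroup Pgp] (ηP : P →+ Pgp), IsGroupification ηP →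
          ∃ p : P, ηP p = 0 ∧ p ≠ 0) ∧
      (∀ (P : Type*) [AddCommMonoid P] (iM : M →+ P) (iL : L →+ P),
        IsMonPushout i₂ (ηN.codRestrict L hsub) iM iL →
        ∀ (Pgp : Type*) [AddCommGroup Pgp] (ηP : P →+ Pgp), IsGroupification ηP →
          ∃ p : P, ηP p = 0 ∧ p ≠ 0) := by
  classical
  obtain ⟨a₁, b₁, hiab₁, hab₁⟩ := Function.not_injective_iff.mp h₁
  obtain ⟨a₂, b₂, hiab₂, hab₂⟩ := Function.not_injective_iff.mp h₂
  -- torsion freeness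
  have tf : ∀ (k : ℕ), 0 < k → ∀ x : Ngp, k • x = 0 → x = 0 := by
    intro k hk x hkx
    obtain ⟨mm, hmm⟩ := hNsat x ⟨k, hk, by rw [hkx]; exact ⟨0, map_zero ηN⟩⟩
    have h1 : ηN (k • mm) = ηN 0 := by rw [map_nsmul, hmm, hkx, map_zero]
    have h2 : k • mm = 0 := hNinj h1
    obtain ⟨k', rfl⟩ := Nat.exists_eq_succ_of_ne_zero hk.ne'
    rw [succ_nsmul] at h2
    have h3 : IsAddUnit mm := IsAddUnit.of_add_eq_zero _ (by rw [add_comm]; exact h2)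
    rw [← hmm, hNsharp mm h3, map_zero]
  haveI : NoZeroSMulDivisors ℤ Ngp := by
    refine ⟨fun {c} {x} hcx => ?_⟩
    by_cases hc : c = 0
    · exact Or.inl hc
    · refine Or.inr ?_
      have h2 : (c.natAbs) • x = 0 := by
        rcases Int.natAbs_eq c with h | h
        · rw [← natCast_zsmul, ← h]; exact hcx
        · have : (-(c.natAbs : ℤ)) • x = 0 := by rw [← h]; exact hcx
          rw [neg_smul, neg_eq_zero, natCast_zsmul] at this; exact this
      exact tf c.natAbs (Int.natAbs_pos.mpr hc) x h2
  obtain ⟨S, hS⟩ := hNfg.fg_top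
  have keyN : ∀ (F : N →+ Ngp) (X : Set Ngp), (∀ s ∈ S, F s ∈ AddSubmonoid.closure X) →
      ∀ n, F n ∈ AddSubmonoid.closure X := by
    intro F X hF n
    have hle : AddSubmonoid.closure (S : Set N) ≤ (AddSubmonoid.closure X).comap F :=
      AddSubmonoid.closure_le.mpr (fun s hs => hF s hs)
    have h2 : n ∈ AddSubmonoid.closure (S : Set N) := by rw [hS]; trivial
    exact hle h2
  haveI : Module.Finite ℤ Ngp := by
    rw [Module.Finite.iff_addGroup_fg, AddGroup.fg_iff_addMonoid_fg]
    set T : Finset Ngp := S.image (fun s => ηN s) ∪ S.image (fun s => -(ηN s)) with hT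
    have hclo : AddSubmonoid.closure (T : Set Ngp) = ⊤ := by
      rw [eq_top_iff]
      intro x _
      obtain ⟨aa, bb, hx⟩ := hgpN.1 x
      rw [hx, sub_eq_add_neg]
      apply AddSubmonoid.add_mem
      · refine keyN ηN _ (fun s hs => AddSubmonoid.subset_closure ?_) aa
        simp only [hT, Finset.coe_union, Set.mem_union, Finset.coe_image, Set.mem_image,
          Finset.mem_coe]
        exact Or.inl ⟨s, hs, rfl⟩
      · have hneg := keyN ((negAddMonoidHom : Ngp →+ Ngp).comp ηN) (T : Set Ngp)
          (fun s hs => AddSubmonoid.subset_closure (by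
            simp only [hT, Finset.coe_union, Set.mem_union, Finset.coe_image, Set.mem_image,
              Finset.mem_coe, AddMonoidHom.comp_apply]
            exact Or.inr ⟨s, hs, rfl⟩)) bb
        simpa using hneg
    exact AddMonoid.FG.mk ⟨T, hclo⟩
  haveI : Module.Free ℤ Ngp := Module.free_of_finite_type_torsion_free'
  set ιB := Module.Free.ChooseBasisIndex ℤ Ngp with hιB
  haveI : DecidableEq ιB := Classical.decEq _
  set b : Module.Basis ιB ℤ Ngp := Module.Free.chooseBasis ℤ Ngp with hb
  set icrdH : Ngp →+ (ιB → ℤ) := AddMonoidHom.mk' (fun x j => b.repr x j)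
    (by intro x y; funext j; simp [map_add]) with hicrdH
  set crdH : Ngp →+ (ιB → ℚ) := AddMonoidHom.mk' (fun x j => ((b.repr x j : ℤ) : ℚ))
    (by intro x y; funext j; simp [map_add]) with hcrdH
  have crdH_inj : ∀ x : Ngp, crdH x = 0 → x = 0 := by
    intro x hx
    have h1 : b.repr x = 0 := by
      ext j
      have h2 := congrFun hx j
      simp only [hcrdH, AddMonoidHom.mk'_apply, Pi.zero_apply] at h2
      exact_mod_cast h2
    exact b.repr.map_eq_zero_iff.mp h1
  have icrdH_inj : ∀ x : Ngp, (∀ i, icrdH x i = 0) → x = 0 := by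
    intro x hx
    apply crdH_inj
    funext j
    have := hx j
    simp only [hicrdH, AddMonoidHom.mk'_apply] at this
    simp only [hcrdH, AddMonoidHom.mk'_apply, this, Int.cast_zero, Pi.zero_apply]
  have cast_crdH : ∀ (x : Ngp) (j : ιB), ((icrdH x j : ℤ) : ℚ) = crdH x j := fun x j => rfl
  -- the generating family
  set S' : Finset N := S.erase 0 with hS'
  set m := S'.card with hm
  set e : Fin m → ↥S' := fun j => S'.equivFin.symm j with he
  set gv : Fin m → ιB → ℚ := fun j => crdH (ηN ((e j : ↥S') : N)) with hgv
  have hno : ∀ t : Fin m → ℚ, (∀ j, 0 ≤ t j) → ∑ j, t j • gv j = 0 → ∀ j, t j = 0 := by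
    intro t ht hrel
    by_contra hcon
    push_neg at hcon
    obtain ⟨j0, hj0⟩ := hcon
    obtain ⟨zt, dq, hdq, hzt⟩ := exists_int_vec (ι := Fin m) t
    have hztnn : ∀ j, 0 ≤ zt j := by
      intro j
      have h1 : (0:ℚ) ≤ (zt j : ℚ) := by rw [hzt j]; exact mul_nonneg hdq.le (ht j)
      exact_mod_cast h1
    set nt : Fin m → ℕ := fun j => (zt j).toNat with hnt
    have hntc : ∀ j, ((nt j : ℚ)) = dq * t j := by
      intro j
      have h1 : ((nt j : ℤ)) = zt j := Int.toNat_of_nonneg (hztnn j)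
      have h2 : ((nt j : ℚ)) = ((zt j : ℤ) : ℚ) := by exact_mod_cast congrArg (Int.cast : ℤ → ℚ) h1
      rw [h2]; exact hzt j
    set y : N := ∑ j, nt j • ((e j : ↥S') : N) with hy
    have hcy : crdH (ηN y) = 0 := by
      have h1 : crdH (ηN y) = ∑ j, (nt j : ℚ) • gv j := by
        rw [hy, map_sum, map_sum]
        apply Finset.sum_congr rfl
        intro j _
        rw [map_nsmul, map_nsmul, ← Nat.cast_smul_eq_nsmul ℚ]
      have h2 : ∑ j, ((nt j : ℚ)) • gv j = dq • ∑ j, t j • gv j := by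
        rw [Finset.smul_sum]
        apply Finset.sum_congr rfl
        intro j _
        rw [smul_smul, hntc j]
      rw [h1, h2, hrel, smul_zero]
    have hy0 : y = 0 := hNinj (by rw [crdH_inj _ hcy, map_zero])
    have hnt0 : nt j0 ≠ 0 := by
      intro hc
      have h1 := hntc j0
      rw [hc] at h1
      have h2 : t j0 = 0 := by
        have := h1.symm
        simp only [Nat.cast_zero] at this
        rcases mul_eq_zero.mp this with h | h
        · exact absurd h hdq.ne'
        · exact h
      exact hj0 h2
    obtain ⟨k', hk'⟩ := Nat.exists_eq_succ_of_ne_zero hnt0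
    have hsplit := Finset.add_sum_erase Finset.univ
      (fun j => nt j • ((e j : ↥S') : N)) (Finset.mem_univ j0)
    rw [← hy, hy0] at hsplit
    rw [hk', succ_nsmul] at hsplit
    have hunit : IsAddUnit ((e j0 : ↥S') : N) := by
      apply IsAddUnit.of_add_eq_zero (k' • ((e j0 : ↥S') : N) +
        ∑ j ∈ Finset.univ.erase j0, nt j • ((e j : ↥S') : N))
      calc ((e j0 : ↥S') : N) + (k' • ((e j0 : ↥S') : N) +
            ∑ j ∈ Finset.univ.erase j0, nt j • ((e j : ↥S') : N))
          = k' • ((e j0 : ↥S') : N) + ((e j0 : ↥S') : N) +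
            ∑ j ∈ Finset.univ.erase j0, nt j • ((e j : ↥S') : N) := by abel
        _ = 0 := hsplit
    have hzero : ((e j0 : ↥S') : N) = 0 := hNsharp _ hunit
    have hmem : ((e j0 : ↥S') : N) ∈ S.erase 0 := (e j0).2
    exact (Finset.mem_erase.mp hmem).1 hzero
  -- first kernel-pair direction
  have hcne : ∀ (a b : N), a ≠ b → crdH (ηN a - ηN b) ≠ 0 := by
    intro a b hab hc
    exact (sub_ne_zero.mpr (fun h' => hab (hNinj h'))) (crdH_inj _ hc)
  obtain ⟨w₁, y₁, hy₁, hw₁v, hw₁y⟩ := gordan_ext gv hno (crdH (ηN a₁ - ηN b₁)) (hcne _ _ hab₁)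
  obtain ⟨A₁, B₁, hAB₁ne, hiAB₁, hyd₁⟩ :
      ∃ A B : N, A ≠ B ∧ i₁ A = i₁ B ∧ y₁ = crdH (ηN A - ηN B) := by
    rcases hy₁ with h | h
    · exact ⟨a₁, b₁, hab₁, hiab₁, h⟩
    · refine ⟨b₁, a₁, hab₁.symm, hiab₁.symm, ?_⟩
      rw [h, ← map_neg]
      congr 1
      abel
  set d₁ : Ngp := ηN A₁ - ηN B₁ with hd₁
  have hw₁d : 0 < w₁ ⬝ᵥ crdH d₁ := by rw [hd₁, ← hyd₁]; exact hw₁y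
  set gv' : Fin (m+1) → ιB → ℚ := Fin.snoc gv (crdH d₁) with hgv'
  have hw₁v' : ∀ j, 0 < w₁ ⬝ᵥ gv' j := by
    intro j
    refine Fin.lastCases ?_ ?_ j
    · rw [hgv', Fin.snoc_last]; exact hw₁d
    · intro j'; rw [hgv', Fin.snoc_castSucc]; exact hw₁v j'
  obtain ⟨w, y₂, hy₂, hwv', hwy₂⟩ := gordan_ext gv'
    (fun t ht hrel => norel gv' w₁ hw₁v' ht hrel) (crdH (ηN a₂ - ηN b₂)) (hcne _ _ hab₂)
  obtain ⟨A₂, B₂, hAB₂ne, hiAB₂, hyd₂⟩ :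
      ∃ A B : N, A ≠ B ∧ i₂ A = i₂ B ∧ y₂ = crdH (ηN A - ηN B) := by
    rcases hy₂ with h | h
    · exact ⟨a₂, b₂, hab₂, hiab₂, h⟩
    · refine ⟨b₂, a₂, hab₂.symm, hiab₂.symm, ?_⟩
      rw [h, ← map_neg]
      congr 1
      abel
  set d₂ : Ngp := ηN A₂ - ηN B₂ with hd₂
  have hwgv : ∀ j : Fin m, 0 < w ⬝ᵥ gv j := by
    intro j
    have := hwv' j.castSucc
    rwa [hgv', Fin.snoc_castSucc] at this
  have hwd₁ : 0 < w ⬝ᵥ crdH d₁ := by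
    have := hwv' (Fin.last m)
    rwa [hgv', Fin.snoc_last] at this
  have hwd₂ : 0 < w ⬝ᵥ crdH d₂ := by rw [hd₂, ← hyd₂]; exact hwy₂
  -- integral scaling
  obtain ⟨wz, dq2, hdq2, hwz⟩ := exists_int_vec w
  have bridge : ∀ x : Ngp, ((wz ⬝ᵥ icrdH x : ℤ) : ℚ) = dq2 * (w ⬝ᵥ crdH x) := by
    intro x
    rw [dotProduct, dotProduct]
    push_cast
    rw [Finset.mul_sum]
    apply Finset.sum_congr rfl
    intro j _
    rw [hwz j, ← cast_crdH x j]
    ring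
  have hwzpos : ∀ x : Ngp, 0 < w ⬝ᵥ crdH x → 1 ≤ wz ⬝ᵥ icrdH x := by
    intro x hx
    have h1 : (0:ℚ) < ((wz ⬝ᵥ icrdH x : ℤ) : ℚ) := by
      rw [bridge]; exact mul_pos hdq2 hx
    have h2 : (0:ℤ) < wz ⬝ᵥ icrdH x := by exact_mod_cast h1
    omega
  -- the bound B and the functionals f i
  set B : ℤ := (∑ s ∈ S', ∑ i, |icrdH (ηN s) i|) + ∑ i, |icrdH d₁ i| + ∑ i, |icrdH d₂ i|
    with hB
  have habs1 : (0:ℤ) ≤ ∑ s ∈ S', ∑ i, |icrdH (ηN s) i| :=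
    Finset.sum_nonneg (fun _ _ => Finset.sum_nonneg (fun _ _ => abs_nonneg _))
  have habs2 : (0:ℤ) ≤ ∑ i, |icrdH d₁ i| := Finset.sum_nonneg (fun _ _ => abs_nonneg _)
  have habs3 : (0:ℤ) ≤ ∑ i, |icrdH d₂ i| := Finset.sum_nonneg (fun _ _ => abs_nonneg _)
  have hb1 : ∀ s ∈ S', ∀ i, |icrdH (ηN s) i| ≤ B := by
    intro s hs i
    have h1 : |icrdH (ηN s) i| ≤ ∑ i, |icrdH (ηN s) i| :=
      Finset.single_le_sum (f := fun i => |icrdH (ηN s) i|)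
        (fun _ _ => abs_nonneg _) (Finset.mem_univ i)
    have h2 : ∑ i, |icrdH (ηN s) i| ≤ ∑ s ∈ S', ∑ i, |icrdH (ηN s) i| :=
      Finset.single_le_sum (f := fun s => ∑ i, |icrdH (ηN s) i|)
        (fun _ _ => Finset.sum_nonneg (fun _ _ => abs_nonneg _)) hs
    rw [hB]; linarith
  have hb2 : ∀ i, |icrdH d₁ i| ≤ B := by
    intro i
    have h1 : |icrdH d₁ i| ≤ ∑ i, |icrdH d₁ i| :=
      Finset.single_le_sum (f := fun i => |icrdH d₁ i|)
        (fun _ _ => abs_nonneg _) (Finset.mem_univ i)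
    rw [hB]; linarith
  have hb3 : ∀ i, |icrdH d₂ i| ≤ B := by
    intro i
    have h1 : |icrdH d₂ i| ≤ ∑ i, |icrdH d₂ i| :=
      Finset.single_le_sum (f := fun i => |icrdH d₂ i|)
        (fun _ _ => abs_nonneg _) (Finset.mem_univ i)
    rw [hB]; linarith
  set K : ℤ := B + 2 with hK
  have hK2 : 2 ≤ K := by rw [hK]; linarith
  set f : ιB → (Ngp →+ ℤ) := fun i => AddMonoidHom.mk'
    (fun x => (K • wz + Pi.single i 1) ⬝ᵥ icrdH x)
    (fun x y => by simp only [map_add, dotProduct_add]) with hf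
  have f_apply : ∀ i x, f i x = K * (wz ⬝ᵥ icrdH x) + icrdH x i := by
    intro i x
    show (K • wz + Pi.single i 1) ⬝ᵥ icrdH x = _
    rw [add_dotProduct, smul_dotProduct, single_dotProduct,
      smul_eq_mul, one_mul]
  have key_pos : ∀ x : Ngp, 0 < w ⬝ᵥ crdH x → (∀ i, |icrdH x i| ≤ B) → ∀ i, 0 ≤ f i x := by
    intro x hx hbd i
    rw [f_apply]
    have h1 : 1 ≤ wz ⬝ᵥ icrdH x := hwzpos x hx
    have h2 : K ≤ K * (wz ⬝ᵥ icrdH x) := le_mul_of_one_le_right (by linarith) h1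
    have h3 := (abs_le.mp (hbd i)).1
    rw [hK] at h2 ⊢
    linarith
  -- independence / injectivity
  set Sw : ℤ := ∑ i, wz i with hSw
  set T : ℤ := 1 + K * Sw with hT
  have hTne : T ≠ 0 := by
    intro hc
    rw [hT] at hc
    have h1 : K * (-Sw) = 1 := by linarith
    have h2 : K = 1 := Int.eq_one_of_mul_eq_one_right (by linarith) h1
    linarith
  have f_inj : ∀ x : Ngp, (∀ i, f i x = 0) → x = 0 := by
    intro x hx
    set A := wz ⬝ᵥ icrdH x with hA
    have h1 : ∀ i, icrdH x i = -(K * A) := by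
      intro i
      have := hx i
      rw [f_apply] at this
      linarith
    have h2 : A = (∑ i, wz i) * (-(K * A)) := by
      conv_lhs => rw [hA, dotProduct]
      rw [Finset.sum_mul]
      exact Finset.sum_congr rfl (fun j _ => by rw [h1 j])
    have h3 : A * T = 0 := by
      rw [hT, hSw]
      linear_combination h2
    have h4 : A = 0 := by
      rcases mul_eq_zero.mp h3 with h | h
      · exact h
      · exact absurd h hTne
    apply icrdH_inj
    intro i
    rw [h1 i, h4]
    ring
  -- dual vectors
  set ζ : ιB → ιB → ℤ := fun i => (T*T) • Pi.single i 1 - (K * wz i * T) • (fun _ => 1) with hζ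
  set zz : ιB → Ngp := fun i => ∑ j, ζ i j • b j with hzz
  have hicrdzz : ∀ i, icrdH (zz i) = ζ i := by
    intro i
    funext j
    show (b.repr (∑ j, ζ i j • b j)) j = ζ i j
    rw [b.repr_sum_self]
  have hdotones : ∀ (u : ιB → ℤ), u ⬝ᵥ (fun _ => 1) = ∑ i, u i := by
    intro u; simp [dotProduct]
  have hfz : ∀ i j, f j (zz i) = if i = j then T*T else 0 := by
    intro i j
    rw [f_apply, hicrdzz]
    have h1 : wz ⬝ᵥ ζ i = wz i * T := by
      rw [hζ]
      dsimp only
      rw [dotProduct_sub, dotProduct_smul, dotProduct_smul,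
        dotProduct_single, hdotones]
      rw [← hSw]
      simp only [smul_eq_mul, mul_one]
      rw [hT]
      ring
    have h2 : ζ i j = T*T*(if j = i then 1 else 0) - K * wz i * T := by
      rw [hζ]
      dsimp only
      simp only [Pi.sub_apply, Pi.smul_apply, smul_eq_mul, Pi.single_apply, mul_one]
    rw [h1, h2]
    by_cases hij : i = j
    · subst hij
      rw [if_pos rfl, if_pos rfl]
      ring
    · rw [if_neg (fun hc => hij hc.symm), if_neg hij]
      ring
  -- the submonoid L
  set L : AddSubmonoid Ngp :=
    { carrier := {x : Ngp | ∀ i, 0 ≤ f i x}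
      zero_mem' := fun i => by rw [map_zero]
      add_mem' := fun {x} {y} hx hy i => by
        rw [map_add]; exact add_nonneg (hx i) (hy i) } with hL
  have hmemL : ∀ x : Ngp, x ∈ L ↔ ∀ i, 0 ≤ f i x := fun x => Iff.rfl
  have hgen : ∀ s ∈ S, ηN s ∈ L := by
    intro s hs
    by_cases hs0 : s = 0
    · rw [hs0, map_zero]; exact L.zero_mem
    · have hsS' : s ∈ S' := by rw [hS']; exact Finset.mem_erase.mpr ⟨hs0, hs⟩
      refine (hmemL _).mpr (key_pos _ ?_ (hb1 s hsS'))
      have hpos := hwgv (S'.equivFin ⟨s, hsS'⟩)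
      simp only [hgv, he] at hpos
      rwa [Equiv.symm_apply_apply] at hpos
  have hsub : ∀ n : N, ηN n ∈ L := by
    intro n
    have hle : AddSubmonoid.closure (S : Set N) ≤ L.comap ηN :=
      AddSubmonoid.closure_le.mpr (fun s hs => hgen s hs)
    have h2 : n ∈ AddSubmonoid.closure (S : Set N) := by rw [hS]; trivial
    exact hle h2
  have hLsharp : ∀ x : Ngp, x ∈ L → -x ∈ L → x = 0 := by
    intro x hx hnx
    apply f_inj
    intro i
    have ha := (hmemL x).mp hx i
    have hbb := (hmemL (-x)).mp hnx i
    rw [map_neg] at hbb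
    omega
  have hLsat : ∀ x : Ngp, (∃ a : ℕ, 0 < a ∧ a • x ∈ L) → x ∈ L := by
    rintro x ⟨k, hk, hkx⟩
    refine (hmemL _).mpr (fun i => ?_)
    have h1 := (hmemL _).mp hkx i
    rw [map_nsmul, nsmul_eq_mul] at h1
    have hkz : (0:ℤ) < (k:ℤ) := by exact_mod_cast hk
    by_contra hcon
    push_neg at hcon
    have := mul_neg_of_pos_of_neg hkz hcon
    linarith
  have hLfg : L.FG := fg_posSubmonoid f f_inj (T*T) (mul_self_pos.mpr hTne) zz hfz L hmemL
  have hd₁L : d₁ ∈ L := (hmemL _).mpr (key_pos _ hwd₁ hb2)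
  have hd₂L : d₂ ∈ L := (hmemL _).mpr (key_pos _ hwd₂ hb3)
  refine ⟨L, hsub, hLsharp, hLfg, hLsat, ?_, ?_⟩
  · intro P instP iM iL hpo Pgp instPgp ηP _
    exact pushout_helper ηN hNinj hNsharp hMsharp i₁ h₁loc L hsub hLsharp A₁ B₁ hAB₁ne
      hiAB₁ hd₁L P iM iL hpo Pgp ηP
  · intro P instP iM iL hpo Pgp instPgp ηP _
    exact pushout_helper ηN hNinj hNsharp hMsharp i₂ h₂loc L hsub hLsharp A₂ B₂ hAB₂ne
      hiAB₂ hd₂L P iM iL hpo Pgp ηP
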